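/- β-independence of the normalized wavefunction: let M ≥ N ≥ 1, let m ∈ {0,1}^M with ∑ m_j = N, and let z₁,…,z_N ∈ ℂ. Then for all β, β′ ∈ ℂ: ⟨m| B̃_β(z₁)∘⋯∘B̃_β(z_N) |Ω⟩ · ∏_{1≤j<k≤N}(z_j + z_k + 2β′z_j z_k) = ⟨m| B̃_{β′}(z₁)∘⋯∘B̃_{β′}(z_N) |Ω⟩ · ∏_{1≤j<k≤N}(z_j + z_k + 2βz_j z_k). In particular, ⟨m| B̃_β(z₁)∘⋯∘B̃_β(z_N) |Ω⟩ is divisible (as a polynomial in β and the z's) by ∏_{1≤j<k≤N}(z_j + z_k + 2βz_j z_k), with quotient independent of β. -/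

import Mathlib

noncomputable section

/-- The renormalized six-vertex L-operator L̃_β(z), as a matrix on ℂ² ⊗ ℂ² in
the ordered basis (e₀⊗e₀, e₀⊗e₁, e₁⊗e₀, e₁⊗e₁); the first factor is the
auxiliary space. -/
def Ltilde (β z : ℂ) : Matrix (Fin 2 × Fin 2) (Fin 2 × Fin 2) ℂ :=
  fun p q =>
    if p = ((0 : Fin 2), (0 : Fin 2)) ∧ q = (0, 0) then 1
    else if p = (0, 1) ∧ q = (0, 1) then 1 + 2 * β * z
    else if p = (0, 1) ∧ q = (1, 0) then 2 * z
    else if p = (1, 0) ∧ q = (0, 1) then 1 + β * z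
    else if p = (1, 0) ∧ q = (1, 0) then z
    else if p = (1, 1) ∧ q = (1, 1) then z
    else 0

/-- A two-site operator acting on the auxiliary space ℂ²_a and the j-th site of
(ℂ²)^{⊗M}, as a matrix on ℂ²_a ⊗ (ℂ²)^{⊗M}. -/
def siteOp (M : ℕ) (L : Matrix (Fin 2 × Fin 2) (Fin 2 × Fin 2) ℂ) (j : Fin M) :
    Matrix (Fin 2 × (Fin M → Fin 2)) (Fin 2 × (Fin M → Fin 2)) ℂ :=
  fun p q => L (p.1, p.2 j) (q.1, q.2 j) *
    (if ∀ k, k ≠ j → p.2 k = q.2 k then 1 else 0)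

/-- The homogeneous monodromy matrix T_a = L_{aM} ∘ ⋯ ∘ L_{a1}
(site 1 acts first) built from a common L-operator. -/
def monoH (M : ℕ) (L : Matrix (Fin 2 × Fin 2) (Fin 2 × Fin 2) ℂ) :
    Matrix (Fin 2 × (Fin M → Fin 2)) (Fin 2 × (Fin M → Fin 2)) ℂ :=
  (List.ofFn fun k : Fin M => siteOp M L k.rev).prod

/-- B̃_β(z) = ⟨0|_a T̃_a(z) |1⟩_a for the renormalized six-vertex model. -/
def BtildeOp (M : ℕ) (β z : ℂ) : Matrix (Fin M → Fin 2) (Fin M → Fin 2) ℂ :=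
  fun s s' => monoH M (Ltilde β z) (0, s) (1, s')



namespace SixVProof

variable {R : Type*} [CommRing R]

def L0 (β z : R) : Matrix (Fin 2 × Fin 2) (Fin 2 × Fin 2) R :=
  fun p q =>
    if p = ((0 : Fin 2), (0 : Fin 2)) ∧ q = (0, 0) then 1
    else if p = (0, 1) ∧ q = (0, 1) then 1 + 2 * β * z
    else if p = (0, 1) ∧ q = (1, 0) then 2 * z
    else if p = (1, 0) ∧ q = (0, 1) then 1 + β * z
    else if p = (1, 0) ∧ q = (1, 0) then z
    else if p = (1, 1) ∧ q = (1, 1) then z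
    else 0

def site (M : ℕ) (L : Matrix (Fin 2 × Fin 2) (Fin 2 × Fin 2) R) (j : Fin M) :
    Matrix (Fin 2 × (Fin M → Fin 2)) (Fin 2 × (Fin M → Fin 2)) R :=
  fun p q => L (p.1, p.2 j) (q.1, q.2 j) *
    (if ∀ k, k ≠ j → p.2 k = q.2 k then 1 else 0)

def Tm (M : ℕ) (L : Matrix (Fin 2 × Fin 2) (Fin 2 × Fin 2) R) (js : List (Fin M)) :
    Matrix (Fin 2 × (Fin M → Fin 2)) (Fin 2 × (Fin M → Fin 2)) R :=
  (js.map (site M L)).prod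

def blk {M : ℕ} (X : Matrix (Fin 2 × (Fin M → Fin 2)) (Fin 2 × (Fin M → Fin 2)) R)
    (a b : Fin 2) : Matrix (Fin M → Fin 2) (Fin M → Fin 2) R :=
  fun s s' => X (a, s) (b, s')

def emb (M : ℕ) (j : Fin M) (m : Matrix (Fin 2) (Fin 2) R) :
    Matrix (Fin M → Fin 2) (Fin M → Fin 2) R :=
  fun s s' => m (s j) (s' j) * (if ∀ k, k ≠ j → s k = s' k then 1 else 0)

def Lblk (L : Matrix (Fin 2 × Fin 2) (Fin 2 × Fin 2) R) (a b : Fin 2) :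
    Matrix (Fin 2) (Fin 2) R :=
  fun q q' => L (a, q) (b, q')

def Rmat (b c z w : R) : Matrix (Fin 2 × Fin 2) (Fin 2 × Fin 2) R :=
  fun p q =>
    if p = ((0 : Fin 2), (0 : Fin 2)) ∧ q = (0, 0) then z + w + 2 * c * z * w
    else if p = (0, 1) ∧ q = (0, 1) then w - z + 2 * (b - c) * z * w
    else if p = (0, 1) ∧ q = (1, 0) then 2 * z * (1 + c * w)
    else if p = (1, 0) ∧ q = (0, 1) then 2 * w * (1 + b * z)
    else if p = (1, 0) ∧ q = (1, 0) then z - w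
    else if p = (1, 1) ∧ q = (1, 1) then z + w + 2 * b * z * w
    else 0

lemma sum_update {M : ℕ} (s : Fin M → Fin 2) (j : Fin M) (F : (Fin M → Fin 2) → R)
    (hF : ∀ t, ¬(∀ k, k ≠ j → s k = t k) → F t = 0) :
    ∑ t : Fin M → Fin 2, F t = ∑ v : Fin 2, F (Function.update s j v) := by
  classical
  rw [← Finset.sum_filter_of_ne (p := fun t => ∀ k, k ≠ j → s k = t k)
      (by intro t _ h; by_contra hc; exact h (hF t hc))]
  have hleft : ∀ t, (∀ k, k ≠ j → s k = t k) → Function.update s j (t j) = t := by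
    intro t ht; funext k
    rcases eq_or_ne k j with rfl | hk
    · simp
    · rw [Function.update_of_ne hk]; exact ht k hk
  refine Finset.sum_bij' (i := fun t _ => t j) (j := fun v _ => Function.update s j v)
    ?_ ?_ ?_ ?_ ?_
  · intro t ht; exact Finset.mem_univ _
  · intro v _
    simp only [Finset.mem_filter, Finset.mem_univ, true_and]
    intro k hk; rw [Function.update_of_ne hk]
  · intro t ht
    simp only [Finset.mem_filter, Finset.mem_univ, true_and] at ht
    exact hleft t ht
  · intro v _; simp
  · intro t ht
    simp only [Finset.mem_filter, Finset.mem_univ, true_and] at ht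
    rw [hleft t ht]

lemma emb_mul {M : ℕ} (j : Fin M) (m m' : Matrix (Fin 2) (Fin 2) R) :
    emb M j m * emb M j m' = emb M j (m * m') := by
  classical
  ext s s'
  rw [Matrix.mul_apply]
  rw [sum_update s j _ (by
    intro t ht
    simp only [emb, if_neg ht, mul_zero, zero_mul])]
  have hupd : ∀ (v : Fin 2) (k : Fin M), k ≠ j → Function.update s j v k = s k := by
    intro v k hk; rw [Function.update_of_ne hk]
  have h1 : ∀ v : Fin 2, (∀ k, k ≠ j → s k = Function.update s j v k) := by
    intro v k hk; exact (hupd v k hk).symm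
  have h2 : ∀ v : Fin 2, (∀ k, k ≠ j → Function.update s j v k = s' k) ↔
      (∀ k, k ≠ j → s k = s' k) := by
    intro v
    refine forall_congr' fun k => imp_congr_right fun hk => ?_
    rw [hupd v k hk]
  simp only [emb, Function.update_self]
  calc ∑ v : Fin 2, (m (s j) v * if ∀ k, k ≠ j → s k = Function.update s j v k then 1 else 0) *
        (m' v (s' j) * if ∀ k, k ≠ j → Function.update s j v k = s' k then 1 else 0)
      = ∑ v : Fin 2, (m (s j) v * m' v (s' j)) *
          (if ∀ k, k ≠ j → s k = s' k then 1 else 0) := by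
        refine Finset.sum_congr rfl fun v _ => ?_
        rw [if_pos (h1 v), if_congr (h2 v) rfl rfl]; ring
    _ = (m * m') (s j) (s' j) * (if ∀ k, k ≠ j → s k = s' k then 1 else 0) := by
        rw [Matrix.mul_apply, Finset.sum_mul]


lemma emb_mul_apply_ne {M : ℕ} {j k : Fin M} (hjk : j ≠ k) (m m' : Matrix (Fin 2) (Fin 2) R)
    (s s' : Fin M → Fin 2) :
    (emb M j m * emb M k m') s s' =
      m (s j) (s' j) * m' (s k) (s' k) *
        (if ∀ l, l ≠ j → l ≠ k → s l = s' l then 1 else 0) := by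
  classical
  rw [Matrix.mul_apply]
  rw [sum_update s j _ (by
    intro t ht
    simp only [emb, if_neg ht, mul_zero, zero_mul])]
  have hupd : ∀ (v : Fin 2) (l : Fin M), l ≠ j → Function.update s j v l = s l := by
    intro v l hl; rw [Function.update_of_ne hl]
  have h1 : ∀ v : Fin 2, (∀ l, l ≠ j → s l = Function.update s j v l) := by
    intro v l hl; exact (hupd v l hl).symm
  have h2 : ∀ v : Fin 2, (∀ l, l ≠ k → Function.update s j v l = s' l) ↔
      (v = s' j ∧ ∀ l, l ≠ j → l ≠ k → s l = s' l) := by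
    intro v
    constructor
    · intro h
      refine ⟨?_, fun l hlj hlk => ?_⟩
      · have := h j hjk; rwa [Function.update_self] at this
      · have := h l hlk; rwa [hupd v l hlj] at this
    · rintro ⟨rfl, h2⟩ l hlk
      rcases eq_or_ne l j with rfl | hlj
      · rw [Function.update_self]
      · rw [hupd _ l hlj]; exact h2 l hlj hlk
  simp only [emb, Function.update_self]
  calc ∑ v : Fin 2, (m (s j) v * if ∀ l, l ≠ j → s l = Function.update s j v l then 1 else 0) *
        (m' (Function.update s j v k) (s' k) *
          if ∀ l, l ≠ k → Function.update s j v l = s' l then 1 else 0)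
      = ∑ v : Fin 2, m (s j) v * m' (s k) (s' k) *
          (if v = s' j then (if ∀ l, l ≠ j → l ≠ k → s l = s' l then 1 else 0) else 0) := by
        refine Finset.sum_congr rfl fun v _ => ?_
        rw [if_pos (h1 v), hupd v k (Ne.symm hjk), if_congr (h2 v) rfl rfl, ite_and]
        ring
    _ = m (s j) (s' j) * m' (s k) (s' k) *
          (if ∀ l, l ≠ j → l ≠ k → s l = s' l then 1 else 0) := by
        simp only [mul_ite, mul_zero]
        rw [Finset.sum_ite_eq' Finset.univ (s' j)]
        simp

lemma emb_comm {M : ℕ} {j k : Fin M} (hjk : j ≠ k) (m m' : Matrix (Fin 2) (Fin 2) R) :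
    emb M j m * emb M k m' = emb M k m' * emb M j m := by
  ext s s'
  rw [emb_mul_apply_ne hjk, emb_mul_apply_ne (Ne.symm hjk)]
  have : (∀ l, l ≠ j → l ≠ k → s l = s' l) ↔ (∀ l, l ≠ k → l ≠ j → s l = s' l) := by
    constructor <;> (intro h l h1 h2; exact h l h2 h1)
  rw [if_congr this rfl rfl]; ring

lemma emb_smul {M : ℕ} (j : Fin M) (r : R) (m : Matrix (Fin 2) (Fin 2) R) :
    emb M j (r • m) = r • emb M j m := by
  ext s s'; simp [emb, mul_assoc]

lemma emb_sum {M : ℕ} (j : Fin M) {ι : Type*} (t : Finset ι)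
    (F : ι → Matrix (Fin 2) (Fin 2) R) :
    emb M j (∑ i ∈ t, F i) = ∑ i ∈ t, emb M j (F i) := by
  ext s s'; simp [emb, Matrix.sum_apply, Finset.sum_mul]

lemma blk_mul {M : ℕ} (X Y : Matrix (Fin 2 × (Fin M → Fin 2)) (Fin 2 × (Fin M → Fin 2)) R)
    (a b : Fin 2) :
    blk (X * Y) a b = ∑ μ : Fin 2, blk X a μ * blk Y μ b := by
  ext s s'
  simp [blk, Matrix.mul_apply, Fintype.sum_prod_type, Matrix.sum_apply]

lemma blk_one {M : ℕ} (a b : Fin 2) :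
    blk (1 : Matrix (Fin 2 × (Fin M → Fin 2)) (Fin 2 × (Fin M → Fin 2)) R) a b =
      if a = b then 1 else 0 := by
  ext s s'
  by_cases hab : a = b <;> by_cases hss : s = s' <;>
    simp [blk, Matrix.one_apply, Prod.ext_iff, hab, hss]

lemma blk_site {M : ℕ} (L : Matrix (Fin 2 × Fin 2) (Fin 2 × Fin 2) R) (j : Fin M)
    (a b : Fin 2) : blk (site M L j) a b = emb M j (Lblk L a b) := rfl

lemma Tm_nil {M : ℕ} (L : Matrix (Fin 2 × Fin 2) (Fin 2 × Fin 2) R) :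
    Tm M L [] = 1 := rfl

lemma Tm_cons {M : ℕ} (L : Matrix (Fin 2 × Fin 2) (Fin 2 × Fin 2) R) (j : Fin M)
    (js : List (Fin M)) : Tm M L (j :: js) = site M L j * Tm M L js := by
  simp [Tm]

lemma emb_comm_Tm {M : ℕ} {j : Fin M} {js : List (Fin M)} (hj : j ∉ js)
    (m : Matrix (Fin 2) (Fin 2) R) (L : Matrix (Fin 2 × Fin 2) (Fin 2 × Fin 2) R)
    (a b : Fin 2) :
    emb M j m * blk (Tm M L js) a b = blk (Tm M L js) a b * emb M j m := by
  induction js generalizing a b with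
  | nil =>
      rw [Tm_nil, blk_one]
      split <;> simp
  | cons k rest ih =>
      have hjk : j ≠ k := fun h => hj (h ▸ List.mem_cons_self (a := k) (l := rest))
      have hjr : j ∉ rest := fun h => hj (List.mem_cons_of_mem k h)
      rw [Tm_cons, blk_mul, Finset.mul_sum, Finset.sum_mul]
      refine Finset.sum_congr rfl fun μ _ => ?_
      rw [blk_site, ← mul_assoc, emb_comm hjk, mul_assoc, ih hjr, ← mul_assoc]

lemma Tm_supp {M : ℕ} {j : Fin M} {js : List (Fin M)} (hj : j ∉ js)
    (L : Matrix (Fin 2 × Fin 2) (Fin 2 × Fin 2) R)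
    (p q : Fin 2 × (Fin M → Fin 2)) (hne : p.2 j ≠ q.2 j) :
    Tm M L js p q = 0 := by
  induction js generalizing p with
  | nil =>
      rw [Tm_nil]
      exact Matrix.one_apply_ne (fun h => hne (by rw [h]))
  | cons k rest ih =>
      have hjk : j ≠ k := fun h => hj (h ▸ List.mem_cons_self (a := k) (l := rest))
      have hjr : j ∉ rest := fun h => hj (List.mem_cons_of_mem k h)
      rw [Tm_cons, Matrix.mul_apply]
      refine Finset.sum_eq_zero fun u _ => ?_
      by_cases h2 : u.2 j = q.2 j
      · have : p.2 j ≠ u.2 j := fun h => hne (h.trans h2)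
        have hz : site M L k p u = 0 := by
          simp only [site]
          rw [if_neg (fun hall => this (hall j hjk)), mul_zero]
        rw [hz, zero_mul]
      · rw [ih hjr u h2, mul_zero]


@[simp] lemma L0_00_00 (b z : R) : L0 b z (0, 0) (0, 0) = 1 := rfl
@[simp] lemma Rmat_00_00 (b c z w : R) : Rmat b c z w (0, 0) (0, 0) = z + w + 2 * c * z * w := rfl
@[simp] lemma L0_00_01 (b z : R) : L0 b z (0, 0) (0, 1) = 0 := rfl
@[simp] lemma Rmat_00_01 (b c z w : R) : Rmat b c z w (0, 0) (0, 1) = 0 := rfl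
@[simp] lemma L0_00_10 (b z : R) : L0 b z (0, 0) (1, 0) = 0 := rfl
@[simp] lemma Rmat_00_10 (b c z w : R) : Rmat b c z w (0, 0) (1, 0) = 0 := rfl
@[simp] lemma L0_00_11 (b z : R) : L0 b z (0, 0) (1, 1) = 0 := rfl
@[simp] lemma Rmat_00_11 (b c z w : R) : Rmat b c z w (0, 0) (1, 1) = 0 := rfl
@[simp] lemma L0_01_00 (b z : R) : L0 b z (0, 1) (0, 0) = 0 := rfl
@[simp] lemma Rmat_01_00 (b c z w : R) : Rmat b c z w (0, 1) (0, 0) = 0 := rfl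
@[simp] lemma L0_01_01 (b z : R) : L0 b z (0, 1) (0, 1) = 1 + 2 * b * z := rfl
@[simp] lemma Rmat_01_01 (b c z w : R) : Rmat b c z w (0, 1) (0, 1) = w - z + 2 * (b - c) * z * w := rfl
@[simp] lemma L0_01_10 (b z : R) : L0 b z (0, 1) (1, 0) = 2 * z := rfl
@[simp] lemma Rmat_01_10 (b c z w : R) : Rmat b c z w (0, 1) (1, 0) = 2 * z * (1 + c * w) := rfl
@[simp] lemma L0_01_11 (b z : R) : L0 b z (0, 1) (1, 1) = 0 := rfl
@[simp] lemma Rmat_01_11 (b c z w : R) : Rmat b c z w (0, 1) (1, 1) = 0 := rfl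
@[simp] lemma L0_10_00 (b z : R) : L0 b z (1, 0) (0, 0) = 0 := rfl
@[simp] lemma Rmat_10_00 (b c z w : R) : Rmat b c z w (1, 0) (0, 0) = 0 := rfl
@[simp] lemma L0_10_01 (b z : R) : L0 b z (1, 0) (0, 1) = 1 + b * z := rfl
@[simp] lemma Rmat_10_01 (b c z w : R) : Rmat b c z w (1, 0) (0, 1) = 2 * w * (1 + b * z) := rfl
@[simp] lemma L0_10_10 (b z : R) : L0 b z (1, 0) (1, 0) = z := rfl
@[simp] lemma Rmat_10_10 (b c z w : R) : Rmat b c z w (1, 0) (1, 0) = z - w := rfl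
@[simp] lemma L0_10_11 (b z : R) : L0 b z (1, 0) (1, 1) = 0 := rfl
@[simp] lemma Rmat_10_11 (b c z w : R) : Rmat b c z w (1, 0) (1, 1) = 0 := rfl
@[simp] lemma L0_11_00 (b z : R) : L0 b z (1, 1) (0, 0) = 0 := rfl
@[simp] lemma Rmat_11_00 (b c z w : R) : Rmat b c z w (1, 1) (0, 0) = 0 := rfl
@[simp] lemma L0_11_01 (b z : R) : L0 b z (1, 1) (0, 1) = 0 := rfl
@[simp] lemma Rmat_11_01 (b c z w : R) : Rmat b c z w (1, 1) (0, 1) = 0 := rfl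
@[simp] lemma L0_11_10 (b z : R) : L0 b z (1, 1) (1, 0) = 0 := rfl
@[simp] lemma Rmat_11_10 (b c z w : R) : Rmat b c z w (1, 1) (1, 0) = 0 := rfl
@[simp] lemma L0_11_11 (b z : R) : L0 b z (1, 1) (1, 1) = z := rfl
@[simp] lemma Rmat_11_11 (b c z w : R) : Rmat b c z w (1, 1) (1, 1) = z + w + 2 * b * z * w := rfl

lemma Lblk_apply {L : Matrix (Fin 2 × Fin 2) (Fin 2 × Fin 2) R} {a b q q' : Fin 2} :
    Lblk L a b q q' = L (a, q) (b, q') := rfl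

lemma RLL (b c z w : R) (a a' n n' : Fin 2) :
    ∑ μ : Fin 2, ∑ μ' : Fin 2,
        Rmat b c z w (a, a') (μ, μ') • (Lblk (L0 b z) μ n * Lblk (L0 c w) μ' n')
      = ∑ μ : Fin 2, ∑ μ' : Fin 2,
        Rmat b c z w (μ, μ') (n, n') • (Lblk (L0 c w) a' μ' * Lblk (L0 b z) a μ) := by
  ext q q'
  simp only [Fin.sum_univ_two, Matrix.add_apply, Matrix.smul_apply, Matrix.mul_apply,
    Lblk_apply, smul_eq_mul]
  fin_cases a <;> fin_cases a' <;> fin_cases n <;> fin_cases n' <;>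
    fin_cases q <;> fin_cases q' <;>
  · simp only [Fin.zero_eta, Fin.mk_one, Fin.isValue, Fin.sum_univ_two,
      L0_00_00, L0_00_01, L0_00_10, L0_00_11, L0_01_00, L0_01_01, L0_01_10, L0_01_11,
      L0_10_00, L0_10_01, L0_10_10, L0_10_11, L0_11_00, L0_11_01, L0_11_10, L0_11_11,
      Rmat_00_00, Rmat_00_01, Rmat_00_10, Rmat_00_11, Rmat_01_00, Rmat_01_01, Rmat_01_10,
      Rmat_01_11, Rmat_10_00, Rmat_10_01, Rmat_10_10, Rmat_10_11, Rmat_11_00, Rmat_11_01,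
      Rmat_11_10, Rmat_11_11]
    ring


lemma sum4_swap {α : Type*} [AddCommMonoid α] (F : Fin 2 → Fin 2 → Fin 2 → Fin 2 → α) :
    ∑ a : Fin 2, ∑ b : Fin 2, ∑ c : Fin 2, ∑ d : Fin 2, F a b c d
      = ∑ c : Fin 2, ∑ d : Fin 2, ∑ a : Fin 2, ∑ b : Fin 2, F a b c d :=
  calc ∑ a : Fin 2, ∑ b : Fin 2, ∑ c : Fin 2, ∑ d : Fin 2, F a b c d
      = ∑ a : Fin 2, ∑ c : Fin 2, ∑ b : Fin 2, ∑ d : Fin 2, F a b c d :=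
        Finset.sum_congr rfl fun a _ => Finset.sum_comm
    _ = ∑ c : Fin 2, ∑ a : Fin 2, ∑ b : Fin 2, ∑ d : Fin 2, F a b c d := Finset.sum_comm
    _ = ∑ c : Fin 2, ∑ a : Fin 2, ∑ d : Fin 2, ∑ b : Fin 2, F a b c d :=
        Finset.sum_congr rfl fun c _ => Finset.sum_congr rfl fun a _ => Finset.sum_comm
    _ = ∑ c : Fin 2, ∑ d : Fin 2, ∑ a : Fin 2, ∑ b : Fin 2, F a b c d :=
        Finset.sum_congr rfl fun c _ => Finset.sum_comm

lemma swap_mid {α : Type*} [Ring α] (A B C D : α) (h : B * C = C * B) :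
    A * B * (C * D) = (A * C) * (B * D) := by
  rw [mul_assoc, ← mul_assoc B, h, mul_assoc, ← mul_assoc, ← mul_assoc]

lemma RTT {M : ℕ} (b c z w : R) (js : List (Fin M)) (hnd : js.Nodup)
    (a a' n n' : Fin 2) :
    ∑ μ : Fin 2, ∑ μ' : Fin 2, Rmat b c z w (a, a') (μ, μ') •
        (blk (Tm M (L0 b z) js) μ n * blk (Tm M (L0 c w) js) μ' n')
      = ∑ μ : Fin 2, ∑ μ' : Fin 2, Rmat b c z w (μ, μ') (n, n') •
        (blk (Tm M (L0 c w) js) a' μ' * blk (Tm M (L0 b z) js) a μ) := by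
  induction js generalizing a a' n n' with
  | nil =>
      simp only [Tm_nil, blk_one]
      fin_cases a <;> fin_cases a' <;> fin_cases n <;> fin_cases n' <;>
        simp [Fin.sum_univ_two]
  | cons j rest ih =>
      have hj : j ∉ rest := (List.nodup_cons.mp hnd).1
      have hrest : rest.Nodup := (List.nodup_cons.mp hnd).2
      -- abbreviations
      set Sb : Fin 2 → Fin 2 → Matrix (Fin M → Fin 2) (Fin M → Fin 2) R :=
        fun μ ν => blk (site M (L0 b z) j) μ ν with hSb
      set Sc : Fin 2 → Fin 2 → Matrix (Fin M → Fin 2) (Fin M → Fin 2) R :=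
        fun μ ν => blk (site M (L0 c w) j) μ ν with hSc
      set Pb : Fin 2 → Fin 2 → Matrix (Fin M → Fin 2) (Fin M → Fin 2) R :=
        fun μ ν => blk (Tm M (L0 b z) rest) μ ν with hPb
      set Pc : Fin 2 → Fin 2 → Matrix (Fin M → Fin 2) (Fin M → Fin 2) R :=
        fun μ ν => blk (Tm M (L0 c w) rest) μ ν with hPc
      have hPbSc : ∀ α β γ δ : Fin 2, Pb α β * Sc γ δ = Sc γ δ * Pb α β := by
        intro α β γ δ
        exact (emb_comm_Tm hj (Lblk (L0 c w) γ δ) (L0 b z) α β).symm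
      have hSbPc : ∀ α β γ δ : Fin 2, Sb α β * Pc γ δ = Pc γ δ * Sb α β := by
        intro α β γ δ
        exact emb_comm_Tm hj (Lblk (L0 b z) α β) (L0 c w) γ δ
      have hRLLemb : ∀ ν ν' : Fin 2,
          ∑ μ : Fin 2, ∑ μ' : Fin 2, Rmat b c z w (a, a') (μ, μ') • (Sb μ ν * Sc μ' ν')
            = ∑ μ : Fin 2, ∑ μ' : Fin 2, Rmat b c z w (μ, μ') (ν, ν') •
                (Sc a' μ' * Sb a μ) := by
        intro ν ν'
        have e1 : ∀ μ μ' : Fin 2, Sb μ ν * Sc μ' ν' =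
            emb M j (Lblk (L0 b z) μ ν * Lblk (L0 c w) μ' ν') := by
          intro μ μ'; exact emb_mul j (Lblk (L0 b z) μ ν) (Lblk (L0 c w) μ' ν')
        have e2 : ∀ μ μ' : Fin 2, Sc a' μ' * Sb a μ =
            emb M j (Lblk (L0 c w) a' μ' * Lblk (L0 b z) a μ) := by
          intro μ μ'; exact emb_mul j (Lblk (L0 c w) a' μ') (Lblk (L0 b z) a μ)
        calc ∑ μ : Fin 2, ∑ μ' : Fin 2, Rmat b c z w (a, a') (μ, μ') • (Sb μ ν * Sc μ' ν')
            = emb M j (∑ μ : Fin 2, ∑ μ' : Fin 2, Rmat b c z w (a, a') (μ, μ') •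
               (Lblk (L0 b z) μ ν * Lblk (L0 c w) μ' ν')) := by
              rw [emb_sum]
              refine Finset.sum_congr rfl fun μ _ => ?_
              rw [emb_sum]
              exact Finset.sum_congr rfl fun μ' _ => by rw [e1, emb_smul]
          _ = emb M j (∑ μ : Fin 2, ∑ μ' : Fin 2, Rmat b c z w (μ, μ') (ν, ν') •
               (Lblk (L0 c w) a' μ' * Lblk (L0 b z) a μ)) := by rw [RLL]
          _ = ∑ μ : Fin 2, ∑ μ' : Fin 2, Rmat b c z w (μ, μ') (ν, ν') •
               (Sc a' μ' * Sb a μ) := by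
              rw [emb_sum]
              refine Finset.sum_congr rfl fun μ _ => ?_
              rw [emb_sum]
              exact Finset.sum_congr rfl fun μ' _ => by rw [e2, emb_smul]
      calc ∑ μ : Fin 2, ∑ μ' : Fin 2, Rmat b c z w (a, a') (μ, μ') •
              (blk (Tm M (L0 b z) (j :: rest)) μ n * blk (Tm M (L0 c w) (j :: rest)) μ' n')
          = ∑ μ : Fin 2, ∑ μ' : Fin 2, ∑ ν : Fin 2, ∑ ν' : Fin 2,
              Rmat b c z w (a, a') (μ, μ') •
                (Sb μ ν * Pb ν n * (Sc μ' ν' * Pc ν' n')) := by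
            refine Finset.sum_congr rfl fun μ _ => Finset.sum_congr rfl fun μ' _ => ?_
            rw [Tm_cons, Tm_cons, blk_mul, blk_mul, Finset.sum_mul]
            rw [Finset.smul_sum]
            refine Finset.sum_congr rfl fun ν _ => ?_
            rw [Finset.mul_sum, Finset.smul_sum]
        _ = ∑ ν : Fin 2, ∑ ν' : Fin 2, ∑ μ : Fin 2, ∑ μ' : Fin 2,
              Rmat b c z w (a, a') (μ, μ') •
                ((Sb μ ν * Sc μ' ν') * (Pb ν n * Pc ν' n')) := by
            rw [sum4_swap]
            refine Finset.sum_congr rfl fun ν _ => Finset.sum_congr rfl fun ν' _ =>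
              Finset.sum_congr rfl fun μ _ => Finset.sum_congr rfl fun μ' _ => ?_
            rw [swap_mid _ _ _ _ (hPbSc ν n μ' ν')]
        _ = ∑ ν : Fin 2, ∑ ν' : Fin 2,
              (∑ μ : Fin 2, ∑ μ' : Fin 2, Rmat b c z w (a, a') (μ, μ') • (Sb μ ν * Sc μ' ν'))
                * (Pb ν n * Pc ν' n') := by
            refine Finset.sum_congr rfl fun ν _ => Finset.sum_congr rfl fun ν' _ => ?_
            rw [Finset.sum_mul]
            refine Finset.sum_congr rfl fun μ _ => ?_
            rw [Finset.sum_mul]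
            exact Finset.sum_congr rfl fun μ' _ => by rw [smul_mul_assoc]
        _ = ∑ ν : Fin 2, ∑ ν' : Fin 2, ∑ μ : Fin 2, ∑ μ' : Fin 2,
              Rmat b c z w (μ, μ') (ν, ν') • (Sc a' μ' * Sb a μ * (Pb ν n * Pc ν' n')) := by
            refine Finset.sum_congr rfl fun ν _ => Finset.sum_congr rfl fun ν' _ => ?_
            rw [hRLLemb ν ν', Finset.sum_mul]
            refine Finset.sum_congr rfl fun μ _ => ?_
            rw [Finset.sum_mul]
            exact Finset.sum_congr rfl fun μ' _ => by rw [smul_mul_assoc]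
        _ = ∑ μ : Fin 2, ∑ μ' : Fin 2, (Sc a' μ' * Sb a μ) *
              (∑ ν : Fin 2, ∑ ν' : Fin 2, Rmat b c z w (μ, μ') (ν, ν') • (Pb ν n * Pc ν' n')) := by
            rw [sum4_swap (fun ν ν' μ μ' => Rmat b c z w (μ, μ') (ν, ν') •
              (Sc a' μ' * Sb a μ * (Pb ν n * Pc ν' n')))]
            refine Finset.sum_congr rfl fun μ _ => Finset.sum_congr rfl fun μ' _ => ?_
            rw [Finset.mul_sum]
            refine Finset.sum_congr rfl fun ν _ => ?_
            rw [Finset.mul_sum]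
            refine Finset.sum_congr rfl fun ν' _ => ?_
            rw [mul_smul_comm, mul_assoc]
        _ = ∑ μ : Fin 2, ∑ μ' : Fin 2, (Sc a' μ' * Sb a μ) *
              (∑ ν : Fin 2, ∑ ν' : Fin 2, Rmat b c z w (ν, ν') (n, n') • (Pc μ' ν' * Pb μ ν)) := by
            refine Finset.sum_congr rfl fun μ _ => Finset.sum_congr rfl fun μ' _ => ?_
            rw [ih hrest μ μ' n n']
        _ = ∑ μ : Fin 2, ∑ μ' : Fin 2, ∑ ν : Fin 2, ∑ ν' : Fin 2,
              Rmat b c z w (ν, ν') (n, n') •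
                ((Sc a' μ' * Pc μ' ν') * (Sb a μ * Pb μ ν)) := by
            refine Finset.sum_congr rfl fun μ _ => Finset.sum_congr rfl fun μ' _ => ?_
            rw [Finset.mul_sum]
            refine Finset.sum_congr rfl fun ν _ => ?_
            rw [Finset.mul_sum]
            refine Finset.sum_congr rfl fun ν' _ => ?_
            rw [mul_smul_comm, swap_mid _ _ _ _ (hSbPc a μ μ' ν')]
        _ = ∑ ν : Fin 2, ∑ ν' : Fin 2, Rmat b c z w (ν, ν') (n, n') •
              (blk (Tm M (L0 c w) (j :: rest)) a' ν' * blk (Tm M (L0 b z) (j :: rest)) a ν) := by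
            rw [sum4_swap]
            refine Finset.sum_congr rfl fun ν _ => Finset.sum_congr rfl fun ν' _ => ?_
            rw [Tm_cons, Tm_cons, blk_mul, blk_mul, Finset.sum_mul_sum, Finset.smul_sum]
            rw [show (∑ μ : Fin 2, ∑ μ' : Fin 2, Rmat b c z w (ν, ν') (n, n') •
                (Sc a' μ' * Pc μ' ν' * (Sb a μ * Pb μ ν)))
              = ∑ μ' : Fin 2, ∑ μ : Fin 2, Rmat b c z w (ν, ν') (n, n') •
                (Sc a' μ' * Pc μ' ν' * (Sb a μ * Pb μ ν)) from Finset.sum_comm]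
            exact Finset.sum_congr rfl fun μ' _ => Finset.smul_sum.symm
        _ = ∑ μ : Fin 2, ∑ μ' : Fin 2, Rmat b c z w (μ, μ') (n, n') •
              (blk (Tm M (L0 c w) (j :: rest)) a' μ' * blk (Tm M (L0 b z) (j :: rest)) a μ) := rfl


lemma exchange {M : ℕ} (b c z w : R) (js : List (Fin M)) (hnd : js.Nodup) :
    (z + w + 2 * c * z * w) • (blk (Tm M (L0 b z) js) 0 1 * blk (Tm M (L0 c w) js) 0 1)
      = (z + w + 2 * b * z * w) • (blk (Tm M (L0 c w) js) 0 1 * blk (Tm M (L0 b z) js) 0 1) := by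
  have h := RTT b c z w js hnd 0 0 1 1
  simp only [Fin.sum_univ_two, Rmat_00_00, Rmat_00_01, Rmat_00_10, Rmat_00_11,
    Rmat_01_11, Rmat_10_11, Rmat_11_11, zero_smul, add_zero, zero_add] at h
  exact h

def vac (M : ℕ) : Fin M → Fin 2 := fun _ => 0

lemma L0_col_zero (b c z : R) (x : Fin 2 × Fin 2) (y : Fin 2) :
    L0 b z x (y, 0) = L0 c z x (y, 0) := by
  fin_cases x <;> fin_cases y <;> rfl

lemma Tm_vac {M : ℕ} (b c z : R) (js : List (Fin M)) (hnd : js.Nodup)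
    (p : Fin 2 × (Fin M → Fin 2)) (a' : Fin 2) :
    Tm M (L0 b z) js p (a', vac M) = Tm M (L0 c z) js p (a', vac M) := by
  induction js generalizing p with
  | nil => rfl
  | cons j rest ih =>
      have hj : j ∉ rest := (List.nodup_cons.mp hnd).1
      have hrest : rest.Nodup := (List.nodup_cons.mp hnd).2
      rw [Tm_cons, Tm_cons, Matrix.mul_apply, Matrix.mul_apply]
      refine Finset.sum_congr rfl fun u _ => ?_
      by_cases hu : u.2 j = 0
      · have hsite : site M (L0 b z) j p u = site M (L0 c z) j p u := by
          simp only [site, hu]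
          rw [L0_col_zero b c z]
        rw [hsite, ih hrest u]
      · have h1 : Tm M (L0 b z) rest u (a', vac M) = 0 :=
          Tm_supp hj (L0 b z) u (a', vac M) hu
        have h2 : Tm M (L0 c z) rest u (a', vac M) = 0 :=
          Tm_supp hj (L0 c z) u (a', vac M) hu
        rw [h1, h2, mul_zero, mul_zero]

section MapLemmas

variable {A : Type*} [CommRing A]

lemma site_map {M : ℕ} (φ : R →+* A) (L : Matrix (Fin 2 × Fin 2) (Fin 2 × Fin 2) R)
    (j : Fin M) : (site M L j).map φ = site M (L.map φ) j := by
  ext p q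
  simp only [site, Matrix.map_apply, map_mul, apply_ite φ, map_one, map_zero]

lemma Tm_map {M : ℕ} (φ : R →+* A) (L : Matrix (Fin 2 × Fin 2) (Fin 2 × Fin 2) R)
    (js : List (Fin M)) : (Tm M L js).map φ = Tm M (L.map φ) js := by
  induction js with
  | nil => exact Matrix.map_one φ (map_zero φ) (map_one φ)
  | cons j rest ih =>
      rw [Tm_cons, Tm_cons, Matrix.map_mul, ih, site_map]

lemma L0_map (φ : R →+* A) (b z : R) : (L0 b z).map φ = L0 (φ b) (φ z) := by
  ext p q
  simp only [L0, Matrix.map_apply, apply_ite φ, map_add, map_mul, map_one, map_zero, map_ofNat]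

end MapLemmas

lemma commB {M : ℕ} (js : List (Fin M)) (hnd : js.Nodup) (b z w : ℂ) :
    blk (Tm M (L0 b z) js) 0 1 * blk (Tm M (L0 b w) js) 0 1
      = blk (Tm M (L0 b w) js) 0 1 * blk (Tm M (L0 b z) js) 0 1 := by
  classical
  set X : Fin 3 → MvPolynomial (Fin 3) ℂ := fun i => MvPolynomial.X i with hX
  have hswap := exchange (R := MvPolynomial (Fin 3) ℂ) (X 0) (X 0) (X 1) (X 2) js hnd
  have hf : (X 1 + X 2 + 2 * X 0 * X 1 * X 2 : MvPolynomial (Fin 3) ℂ) ≠ 0 := by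
    intro h
    have h2 := congrArg (MvPolynomial.eval fun _ => (1 : ℂ)) h
    simp [hX] at h2
    norm_num at h2
  have hAB : blk (Tm M (L0 (X 0) (X 1)) js) 0 1 * blk (Tm M (L0 (X 0) (X 2)) js) 0 1
      = blk (Tm M (L0 (X 0) (X 2)) js) 0 1 * blk (Tm M (L0 (X 0) (X 1)) js) 0 1 := by
    refine Matrix.ext fun s s' => ?_
    have he := congrFun (congrFun (congrArg (fun (Y : Matrix _ _ _) => (Y : _ → _ → _)) hswap) s) s'
    simp only [Matrix.smul_apply, smul_eq_mul] at he
    exact mul_left_cancel₀ hf he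
  set φ : MvPolynomial (Fin 3) ℂ →+* ℂ :=
    (MvPolynomial.aeval (R := ℂ) ![b, z, w]).toRingHom with hφdef
  have hmap := congrArg (fun (Y : Matrix (Fin M → Fin 2) (Fin M → Fin 2) _) => Y.map φ) hAB
  simp only [Matrix.map_mul] at hmap
  have hb : ∀ (i j : Fin 3), (blk (Tm M (L0 (X i) (X j)) js) 0 1 :
      Matrix (Fin M → Fin 2) (Fin M → Fin 2) (MvPolynomial (Fin 3) ℂ)).map φ
      = blk (Tm M (L0 (φ (X i)) (φ (X j))) js) 0 1 := by
    intro i j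
    have : (Tm M (L0 (X i) (X j)) js).map φ = Tm M (L0 (φ (X i)) (φ (X j))) js := by
      rw [Tm_map, L0_map]
    calc (blk (Tm M (L0 (X i) (X j)) js) 0 1).map φ
        = blk ((Tm M (L0 (X i) (X j)) js).map φ) 0 1 := rfl
      _ = blk (Tm M (L0 (φ (X i)) (φ (X j))) js) 0 1 := by rw [this]
  simp only [hb] at hmap
  have hφ0 : φ (X 0) = b := by rw [hφdef, hX]; simp
  have hφ1 : φ (X 1) = z := by rw [hφdef, hX]; simp
  have hφ2 : φ (X 2) = w := by rw [hφdef, hX]; simp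
  rwa [hφ0, hφ1, hφ2] at hmap


section Complex

variable {M : ℕ}

def fullJs (M : ℕ) : List (Fin M) := List.ofFn fun k : Fin M => k.rev

lemma fullJs_nodup (M : ℕ) : (fullJs M).Nodup :=
  List.nodup_ofFn.mpr Fin.rev_injective

lemma monoH_eq_Tm (L : Matrix (Fin 2 × Fin 2) (Fin 2 × Fin 2) ℂ) :
    monoH M L = Tm M L (fullJs M) := by
  unfold monoH Tm fullJs
  rw [List.map_ofFn]
  rfl

lemma BtildeOp_eq (β z : ℂ) :
    BtildeOp M β z = blk (Tm M (L0 β z) (fullJs M)) 0 1 := by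
  funext s s'
  show monoH M (Ltilde β z) (0, s) (1, s') = _
  rw [monoH_eq_Tm]
  rfl

lemma Bexch (b c z w : ℂ) :
    (z + w + 2 * c * z * w) • (BtildeOp M b z * BtildeOp M c w)
      = (z + w + 2 * b * z * w) • (BtildeOp M c w * BtildeOp M b z) := by
  simp only [BtildeOp_eq]
  exact exchange b c z w (fullJs M) (fullJs_nodup M)

lemma Bcomm (b z w : ℂ) :
    BtildeOp M b z * BtildeOp M b w = BtildeOp M b w * BtildeOp M b z := by
  rw [BtildeOp_eq, BtildeOp_eq]
  exact commB (fullJs M) (fullJs_nodup M) b z w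

lemma Bvac (b c z : ℂ) (s : Fin M → Fin 2) :
    BtildeOp M b z s (vac M) = BtildeOp M c z s (vac M) := by
  show monoH M (Ltilde b z) (0, s) (1, vac M) = monoH M (Ltilde c z) (0, s) (1, vac M)
  rw [monoH_eq_Tm, monoH_eq_Tm]
  exact Tm_vac b c z (fullJs M) (fullJs_nodup M) (0, s) 1

def Pprod (M : ℕ) (b : ℂ) (zs : List ℂ) : Matrix (Fin M → Fin 2) (Fin M → Fin 2) ℂ :=
  (zs.map fun ζ => BtildeOp M b ζ).prod

def pairP (b : ℂ) : List ℂ → ℂ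
  | [] => 1
  | x :: t => (t.map fun y => x + y + 2 * b * x * y).prod * pairP b t

lemma Pprod_nil (b : ℂ) : Pprod M b [] = 1 := rfl

lemma Pprod_cons (b : ℂ) (x : ℂ) (t : List ℂ) :
    Pprod M b (x :: t) = BtildeOp M b x * Pprod M b t := by
  simp [Pprod]

lemma Pprod_concat (b : ℂ) (t : List ℂ) (y : ℂ) :
    Pprod M b (t ++ [y]) = Pprod M b t * BtildeOp M b y := by
  simp [Pprod]

lemma pairP_concat (b : ℂ) (t : List ℂ) (y : ℂ) :
    pairP b (t ++ [y]) = pairP b t * (t.map fun x => x + y + 2 * b * x * y).prod := by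
  induction t with
  | nil => simp [pairP]
  | cons x t ih =>
      show (((t ++ [y]).map fun y' => x + y' + 2 * b * x * y').prod * pairP b (t ++ [y])) = _
      rw [ih, List.map_append, List.prod_append]
      show _ = (t.map fun y' => x + y' + 2 * b * x * y').prod * pairP b t *
        ((x :: t).map fun x' => x' + y + 2 * b * x' * y).prod
      rw [List.map_cons, List.prod_cons]
      simp only [List.map_cons, List.map_nil, List.prod_cons, List.prod_nil]
      ring

lemma Bcomm_prod (c y : ℂ) (t : List ℂ) :
    BtildeOp M c y * Pprod M c t = Pprod M c t * BtildeOp M c y := by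
  induction t with
  | nil => simp [Pprod_nil]
  | cons x t ih =>
      rw [Pprod_cons, ← mul_assoc, Bcomm, mul_assoc, ih, ← mul_assoc]

lemma migrate (b c : ℂ) (t : List ℂ) (y : ℂ) :
    ((t.map fun x => x + y + 2 * c * x * y).prod) • (Pprod M b t * BtildeOp M c y)
      = ((t.map fun x => x + y + 2 * b * x * y).prod) • (BtildeOp M c y * Pprod M b t) := by
  induction t with
  | nil => simp [Pprod_nil]
  | cons x t ih =>
      rw [List.map_cons, List.prod_cons, List.map_cons, List.prod_cons, Pprod_cons,
        mul_assoc (BtildeOp M b x), mul_smul, mul_smul,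
        ← mul_smul_comm _ (BtildeOp M b x), ih, mul_smul_comm,
        smul_comm (x + y + 2 * c * x * y), smul_comm (x + y + 2 * b * x * y)]
      refine congrArg _ ?_
      rw [← mul_assoc, ← mul_assoc, ← smul_mul_assoc, Bexch, smul_mul_assoc]

lemma mainLemma (zs : List ℂ) (b c : ℂ) (m : Fin M → Fin 2) :
    Pprod M b zs m (vac M) * pairP c zs = Pprod M c zs m (vac M) * pairP b zs := by
  induction zs using List.reverseRecOn generalizing m with
  | nil => rfl
  | append_singleton t y ih =>
      rw [Pprod_concat, Pprod_concat, pairP_concat, pairP_concat]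
      have hvacstep : (Pprod M b t * BtildeOp M b y) m (vac M)
          = (Pprod M b t * BtildeOp M c y) m (vac M) := by
        rw [Matrix.mul_apply, Matrix.mul_apply]
        exact Finset.sum_congr rfl fun s _ => by rw [Bvac b c y s]
      have hmig := congrFun (congrFun (congrArg (fun (Y : Matrix _ _ _) => (Y : _ → _ → _))
        (migrate b c t y)) m) (vac M)
      simp only [Matrix.smul_apply, smul_eq_mul] at hmig
      calc (Pprod M b t * BtildeOp M b y) m (vac M) *
              (pairP c t * (t.map fun x => x + y + 2 * c * x * y).prod)
          = ((t.map fun x => x + y + 2 * c * x * y).prod *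
              (Pprod M b t * BtildeOp M c y) m (vac M)) * pairP c t := by
            rw [hvacstep]; ring
        _ = ((t.map fun x => x + y + 2 * b * x * y).prod *
              (BtildeOp M c y * Pprod M b t) m (vac M)) * pairP c t := by
            rw [hmig]
        _ = (t.map fun x => x + y + 2 * b * x * y).prod *
              ∑ s : Fin M → Fin 2, BtildeOp M c y m s * (Pprod M b t s (vac M) * pairP c t) := by
            rw [Matrix.mul_apply, mul_assoc, Finset.sum_mul]
            exact congrArg _ (Finset.sum_congr rfl fun s _ => by ring)
        _ = (t.map fun x => x + y + 2 * b * x * y).prod *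
              ∑ s : Fin M → Fin 2, BtildeOp M c y m s * (Pprod M c t s (vac M) * pairP b t) := by
            exact congrArg _ (Finset.sum_congr rfl fun s _ => by rw [ih])
        _ = ((BtildeOp M c y * Pprod M c t) m (vac M)) *
              (pairP b t * (t.map fun x => x + y + 2 * b * x * y).prod) := by
            rw [Matrix.mul_apply, Finset.sum_mul, Finset.mul_sum]
            exact Finset.sum_congr rfl fun s _ => by ring
        _ = (Pprod M c t * BtildeOp M c y) m (vac M) *
              (pairP b t * (t.map fun x => x + y + 2 * b * x * y).prod) := by
            rw [Bcomm_prod]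

lemma pairP_ofFn : ∀ {N : ℕ} (z : Fin N → ℂ) (b : ℂ),
    pairP b (List.ofFn z) = ∏ j : Fin N, ∏ k ∈ Finset.Ioi j, (z j + z k + 2 * b * z j * z k) := by
  intro N
  induction N with
  | zero => intro z b; simp [pairP]
  | succ n ih =>
      intro z b
      rw [List.ofFn_succ]
      show (((List.ofFn fun i : Fin n => z i.succ).map
          fun y => z 0 + y + 2 * b * z 0 * y).prod) *
          pairP b (List.ofFn fun i : Fin n => z i.succ) = _
      rw [ih (fun i => z i.succ) b, List.map_ofFn, List.prod_ofFn]
      rw [Fin.prod_univ_succ]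
      rw [Fin.prod_Ioi_zero]
      refine congrArg₂ _ rfl ?_
      exact Finset.prod_congr rfl fun j _ => by rw [Fin.prod_Ioi_succ]

end Complex

end SixVProof

/-- β-independence of the normalized wavefunction: the wavefunction
⟨m| B̃_β(z₁)⋯B̃_β(z_N) |Ω⟩ divided by ∏_{j<k}(z_j+z_k+2βz_jz_k) does not
depend on β. -/
theorem normalized_wavefunction_beta_independent (M N : ℕ) (hN : 1 ≤ N) (hMN : N ≤ M)
    (m : Fin M → Fin 2) (hm : ∑ j : Fin M, ((m j : ℕ)) = N)
    (z : Fin N → ℂ) (β β' : ℂ) :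
    ((List.ofFn fun j : Fin N => BtildeOp M β (z j)).prod m (fun _ => 0)) *
        (∏ j : Fin N, ∏ k ∈ Finset.Ioi j, (z j + z k + 2 * β' * z j * z k)) =
      ((List.ofFn fun j : Fin N => BtildeOp M β' (z j)).prod m (fun _ => 0)) *
        (∏ j : Fin N, ∏ k ∈ Finset.Ioi j, (z j + z k + 2 * β * z j * z k)) := by
  have h := SixVProof.mainLemma (M := M) (List.ofFn z) β β' m
  rw [SixVProof.pairP_ofFn, SixVProof.pairP_ofFn] at h
  have hP : ∀ b : ℂ, SixVProof.Pprod M b (List.ofFn z)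
      = (List.ofFn fun j : Fin N => BtildeOp M b (z j)).prod := by
    intro b
    unfold SixVProof.Pprod
    rw [List.map_ofFn]
    rfl
  rw [hP, hP] at h
  exact h
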